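/- Let ξ₁, ξ₂, ξ₃ be real constants with ξ₃ ≠ 0, ξ₂ + ξ₃ ≠ 0, and (2/3)ξ₁ + (4/3)ξ₂ + ξ₃ ≠ 0, and define Q_n(Q) = ξ₁(nn − I/3)(nn:Q) + ξ₂(nn·Q + Q·nn − (2/3)I(nn:Q)) + ξ₃Q on symmetric traceless 3×3 matrices. Then Q_n is invertible, and its inverse has the same form ψ₁(nn − I/3)(nn:Q) + ψ₂(nn·Q + Q·nn − (2/3)I(nn:Q)) + ψ₃Q where ψ₃ξ₃ = 1, ψ₂(ξ₂+ξ₃) + ψ₃ξ₂ = 0, and ψ₁((2/3)ξ₁ + (4/3)ξ₂ + ξ₃) + ψ₂((4/3)ξ₁ + (2/3)ξ₂) + ψ₃ξ₁ = 0. -/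
import Mathlib


open Matrix

/-- Frobenius inner product of 3×3 matrices. -/
def frob (A B : Matrix (Fin 3) (Fin 3) ℝ) : ℝ := ∑ i, ∑ j, A i j * B i j

/-- `Q_n(Q) = ξ₁(nn − I/3)(nn:Q) + ξ₂(nn·Q + Q·nn − (2/3)I(nn:Q)) + ξ₃Q`. -/
noncomputable def Qnop (ξ₁ ξ₂ ξ₃ : ℝ) (n : Fin 3 → ℝ)
    (Q : Matrix (Fin 3) (Fin 3) ℝ) : Matrix (Fin 3) (Fin 3) ℝ :=
  (ξ₁ * frob (vecMulVec n n) Q) • (vecMulVec n n - (1 / 3 : ℝ) • (1 : Matrix (Fin 3) (Fin 3) ℝ)) +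
  ξ₂ • (vecMulVec n n * Q + Q * vecMulVec n n -
    ((2 / 3 : ℝ) * frob (vecMulVec n n) Q) • (1 : Matrix (Fin 3) (Fin 3) ℝ)) +
  ξ₃ • Q

section Aux
variable (n : Fin 3 → ℝ)

lemma frob_add (X Y : Matrix (Fin 3) (Fin 3) ℝ) :
    frob (vecMulVec n n) (X + Y) = frob (vecMulVec n n) X + frob (vecMulVec n n) Y := by
  simp [frob, mul_add, Finset.sum_add_distrib]

lemma frob_sub (X Y : Matrix (Fin 3) (Fin 3) ℝ) :
    frob (vecMulVec n n) (X - Y) = frob (vecMulVec n n) X - frob (vecMulVec n n) Y := by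
  simp [frob, mul_sub, Finset.sum_sub_distrib]

lemma frob_smul (c : ℝ) (X : Matrix (Fin 3) (Fin 3) ℝ) :
    frob (vecMulVec n n) (c • X) = c * frob (vecMulVec n n) X := by
  simp [frob, Finset.mul_sum, mul_left_comm]

lemma frob_one (hn : ∑ i, n i ^ 2 = 1) : frob (vecMulVec n n) 1 = 1 := by
  simp [frob, one_apply, Fin.sum_univ_three, vecMulVec_apply] at *
  linarith [sq (n 0)]

lemma frob_P (hn : ∑ i, n i ^ 2 = 1) : frob (vecMulVec n n) (vecMulVec n n) = 1 := by
  have h : ∀ i j, vecMulVec n n i j * vecMulVec n n i j = n i ^2 * n j ^2 := by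
    intro i j; simp [vecMulVec_apply]; ring
  simp only [frob, h]
  simp [Fin.sum_univ_three] at *
  linear_combination (n 0 ^ 2 + n 1 ^ 2 + n 2 ^ 2 + 1) * hn

lemma frob_mulP (hn : ∑ i, n i ^ 2 = 1) (Q : Matrix (Fin 3) (Fin 3) ℝ) :
    frob (vecMulVec n n) (vecMulVec n n * Q) = frob (vecMulVec n n) Q := by
  simp [frob, mul_apply, vecMulVec_apply, Fin.sum_univ_three] at *
  linear_combination (n 0 * n 0 * Q 0 0 + n 0 * n 1 * Q 0 1 + n 0 * n 2 * Q 0 2 + (n 1 * n 0 * Q 1 0 + n 1 * n 1 * Q 1 1 + n 1 * n 2 * Q 1 2) + (n 2 * n 0 * Q 2 0 + n 2 * n 1 * Q 2 1 + n 2 * n 2 * Q 2 2)) * hn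

lemma frob_Pmul (hn : ∑ i, n i ^ 2 = 1) (Q : Matrix (Fin 3) (Fin 3) ℝ) :
    frob (vecMulVec n n) (Q * vecMulVec n n) = frob (vecMulVec n n) Q := by
  simp [frob, mul_apply, vecMulVec_apply, Fin.sum_univ_three] at *
  linear_combination (n 0 * n 0 * Q 0 0 + n 0 * n 1 * Q 0 1 + n 0 * n 2 * Q 0 2 + (n 1 * n 0 * Q 1 0 + n 1 * n 1 * Q 1 1 + n 1 * n 2 * Q 1 2) + (n 2 * n 0 * Q 2 0 + n 2 * n 1 * Q 2 1 + n 2 * n 2 * Q 2 2)) * hn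

lemma P_sq (hn : ∑ i, n i ^ 2 = 1) : vecMulVec n n * vecMulVec n n = vecMulVec n n := by
  ext i j
  simp [mul_apply, vecMulVec_apply, Fin.sum_univ_three] at *
  linear_combination (n i * n j) * hn

lemma PQP (hn : ∑ i, n i ^ 2 = 1) (Q : Matrix (Fin 3) (Fin 3) ℝ) :
    vecMulVec n n * Q * vecMulVec n n = frob (vecMulVec n n) Q • vecMulVec n n := by
  ext i j
  simp [mul_apply, vecMulVec_apply, frob, Fin.sum_univ_three] at *
  ring

lemma PPQ (n : Fin 3 → ℝ) (hn : ∑ i, n i ^ 2 = 1) (Q : Matrix (Fin 3) (Fin 3) ℝ) :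
    vecMulVec n n * (vecMulVec n n * Q) = vecMulVec n n * Q := by
  rw [← mul_assoc, P_sq n hn]

lemma PQP' (n : Fin 3 → ℝ) (hn : ∑ i, n i ^ 2 = 1) (Q : Matrix (Fin 3) (Fin 3) ℝ) :
    vecMulVec n n * (Q * vecMulVec n n) = frob (vecMulVec n n) Q • vecMulVec n n := by
  rw [← mul_assoc, PQP n hn]

lemma key (ξ₁ ξ₂ ξ₃ ψ₁ ψ₂ ψ₃ : ℝ) (n : Fin 3 → ℝ) (hn : ∑ i, n i ^ 2 = 1)
    (e1 : ψ₃ * ξ₃ = 1)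
    (e2 : ψ₂ * ξ₂ + ψ₂ * ξ₃ + ψ₃ * ξ₂ = 0)
    (e3 : (2/3)*(ψ₁*ξ₁) + (4/3)*(ψ₁*ξ₂) + ψ₁*ξ₃ + (4/3)*(ψ₂*ξ₁) + (2/3)*(ψ₂*ξ₂) + ψ₃*ξ₁ = 0)
    (Q : Matrix (Fin 3) (Fin 3) ℝ) :
    Qnop ψ₁ ψ₂ ψ₃ n (Qnop ξ₁ ξ₂ ξ₃ n Q) = Q := by
  simp only [Qnop, frob_add, frob_sub, frob_smul, frob_one n hn, frob_P n hn,
    frob_mulP n hn, frob_Pmul n hn]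
  simp only [smul_sub, smul_add, smul_smul, mul_smul_comm, smul_mul_assoc, mul_add, add_mul,
    sub_mul, mul_sub, mul_one, one_mul, Matrix.mul_smul, Matrix.smul_mul, mul_assoc,
    P_sq n hn, PQP n hn, PPQ n hn, PQP' n hn]
  match_scalars
  · linear_combination frob (vecMulVec n n) Q * e3
  · linear_combination (-(1/3) * frob (vecMulVec n n) Q) * e3 + (-(2/3) * frob (vecMulVec n n) Q) * e2
  · linear_combination e2
  · linear_combination e2
  · linear_combination e1
end Aux

/-- If `ξ₃ ≠ 0`, `ξ₂ + ξ₃ ≠ 0`, `(2/3)ξ₁ + (4/3)ξ₂ + ξ₃ ≠ 0`, then `Q_n` is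
invertible on symmetric traceless matrices, with inverse of the same form with
coefficients `ψ₁, ψ₂, ψ₃` satisfying the stated linear equations. -/
theorem Qnop_invertible (ξ₁ ξ₂ ξ₃ : ℝ) (n : Fin 3 → ℝ) (hn : ∑ i, n i ^ 2 = 1)
    (h3 : ξ₃ ≠ 0) (h23 : ξ₂ + ξ₃ ≠ 0)
    (h123 : (2 / 3) * ξ₁ + (4 / 3) * ξ₂ + ξ₃ ≠ 0) :
    ∃ ψ₁ ψ₂ ψ₃ : ℝ,
      ψ₃ * ξ₃ = 1 ∧
      ψ₂ * (ξ₂ + ξ₃) + ψ₃ * ξ₂ = 0 ∧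
      ψ₁ * ((2 / 3) * ξ₁ + (4 / 3) * ξ₂ + ξ₃) +
        ψ₂ * ((4 / 3) * ξ₁ + (2 / 3) * ξ₂) + ψ₃ * ξ₁ = 0 ∧
      ∀ Q : Matrix (Fin 3) (Fin 3) ℝ, Q.IsSymm → Q.trace = 0 →
        Qnop ψ₁ ψ₂ ψ₃ n (Qnop ξ₁ ξ₂ ξ₃ n Q) = Q ∧
        Qnop ξ₁ ξ₂ ξ₃ n (Qnop ψ₁ ψ₂ ψ₃ n Q) = Q := by
  set ψ₃ : ℝ := ξ₃⁻¹ with hψ3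
  set ψ₂ : ℝ := -(ξ₃⁻¹ * ξ₂) / (ξ₂ + ξ₃) with hψ2
  set ψ₁ : ℝ := -(ψ₂ * ((4 / 3) * ξ₁ + (2 / 3) * ξ₂) + ψ₃ * ξ₁) /
      ((2 / 3) * ξ₁ + (4 / 3) * ξ₂ + ξ₃) with hψ1
  have E1 : ψ₃ * ξ₃ = 1 := by rw [hψ3]; field_simp
  have E2 : ψ₂ * (ξ₂ + ξ₃) + ψ₃ * ξ₂ = 0 := by
    rw [hψ2, hψ3]; field_simp; ring
  have E3 : ψ₁ * ((2 / 3) * ξ₁ + (4 / 3) * ξ₂ + ξ₃) +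
      ψ₂ * ((4 / 3) * ξ₁ + (2 / 3) * ξ₂) + ψ₃ * ξ₁ = 0 := by
    rw [hψ1, div_mul_cancel₀ _ h123]; ring
  refine ⟨ψ₁, ψ₂, ψ₃, E1, E2, E3, fun Q _ _ => ⟨?_, ?_⟩⟩
  · exact key ξ₁ ξ₂ ξ₃ ψ₁ ψ₂ ψ₃ n hn E1 (by linear_combination E2)
      (by linear_combination E3) Q
  · exact key ψ₁ ψ₂ ψ₃ ξ₁ ξ₂ ξ₃ n hn (by linear_combination E1)
      (by linear_combination E2) (by linear_combination E3) Q
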